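/- arXiv:1407.0189 — 2 statements merged into one kernel-verified Lean document; each statement's English description precedes it below -/
import Mathlib

section
/- Let n ≥ 1, let A be an IFM of order n, let λ ∈ [0,1] and let p > 0 be a real number. Then for every m ≥ 1 and all i, j, the non-membership entry of the m-th power of A under the maxgeneralized mean–mingeneralized mean operation satisfies (A^m)ν i j = min over all m-paths P from i to j of wν(P). -/
open Filter Topology

/-- `A` (given by membership part `Amu` and non-membership part `Anu`) is an
intuitionistic fuzzy matrix. -/
def IsIFM (n : ℕ) (Amu Anu : Fin n → Fin n → ℝ) : Prop :=
  ∀ i j, 0 ≤ Amu i j ∧ 0 ≤ Anu i j ∧ Amu i j + Anu i j ≤ 1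

/-- Powers of an IFM under the maxgeneralized mean–mingeneralized mean operation
with parameters `lam` and exponent `p`:
`A^1 = A` and `A^(k+1) = A^k ∘ A`, where
`(X ∘ A)μ i j = max_t (lam·(Xμ i t)^p + (1-lam)·(Aμ t j)^p)^(1/p)` and
`(X ∘ A)ν i j = min_t (lam·(Xν i t)^p + (1-lam)·(Aν t j)^p)^(1/p)`.
(The value at `0` is irrelevant; it is set to `A`.) -/
noncomputable def gmPow (n : ℕ) (lam p : ℝ) (Amu Anu : Fin n → Fin n → ℝ) :
    ℕ → (Fin n → Fin n → ℝ) × (Fin n → Fin n → ℝ)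
  | 0 => (Amu, Anu)
  | 1 => (Amu, Anu)
  | m + 2 =>
    let X := gmPow n lam p Amu Anu (m + 1)
    (fun i j => ⨆ t : Fin n, (lam * X.1 i t ^ p + (1 - lam) * Amu t j ^ p) ^ (1 / p),
     fun i j => ⨅ t : Fin n, (lam * X.2 i t ^ p + (1 - lam) * Anu t j ^ p) ^ (1 / p))

/-- The coefficient of the `k`-th edge in the weight of an `m`-path:
`lam^(m-1)` for the first edge and `lam^(m-1-k)·(1-lam)` afterwards. -/
noncomputable def gmCoef (lam : ℝ) (m k : ℕ) : ℝ :=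
  if k = 0 then lam ^ (m - 1) else lam ^ (m - 1 - k) * (1 - lam)

/-- Weight of an `m`-path `P` with respect to the entry matrix `B`
(`B = Aμ` gives `wμ(P)`, `B = Aν` gives `wν(P)`). -/
noncomputable def gmWeight (n m : ℕ) (lam p : ℝ) (B : Fin n → Fin n → ℝ)
    (P : Fin (m + 1) → Fin n) : ℝ :=
  (∑ k : Fin m, gmCoef lam m (k : ℕ) * B (P k.castSucc) (P k.succ) ^ p) ^ (1 / p)

section aux

variable {n m : ℕ} {lam p : ℝ} {B : Fin n → Fin n → ℝ}

lemma gmCoef_nonneg (h0 : 0 ≤ lam) (h1 : lam ≤ 1) (m k : ℕ) : 0 ≤ gmCoef lam m k := by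
  unfold gmCoef
  split
  · positivity
  · have : (0:ℝ) ≤ 1 - lam := by linarith
    positivity

lemma gmSum_nonneg (h0 : 0 ≤ lam) (h1 : lam ≤ 1) (hB : ∀ i j, 0 ≤ B i j)
    (P : Fin (m + 1) → Fin n) :
    0 ≤ ∑ k : Fin m, gmCoef lam m (k : ℕ) * B (P k.castSucc) (P k.succ) ^ p := by
  refine Finset.sum_nonneg fun k _ => mul_nonneg (gmCoef_nonneg h0 h1 _ _) ?_
  exact Real.rpow_nonneg (hB _ _) _

lemma gmWeight_nonneg (h0 : 0 ≤ lam) (h1 : lam ≤ 1) (hB : ∀ i j, 0 ≤ B i j)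
    (P : Fin (m + 1) → Fin n) : 0 ≤ gmWeight n m lam p B P :=
  Real.rpow_nonneg (gmSum_nonneg h0 h1 hB P) _

lemma gmWeight_pow (hp : 0 < p) (h0 : 0 ≤ lam) (h1 : lam ≤ 1) (hB : ∀ i j, 0 ≤ B i j)
    (P : Fin (m + 1) → Fin n) :
    gmWeight n m lam p B P ^ p
      = ∑ k : Fin m, gmCoef lam m (k : ℕ) * B (P k.castSucc) (P k.succ) ^ p := by
  rw [gmWeight, ← Real.rpow_mul (gmSum_nonneg h0 h1 hB P), one_div,
    inv_mul_cancel₀ hp.ne', Real.rpow_one]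

lemma gmCoef_succ (k : ℕ) (hk : k ≤ m) :
    gmCoef lam (m + 2) k = lam * gmCoef lam (m + 1) k := by
  by_cases h : k = 0
  · simp only [gmCoef, if_pos h]
    rw [show m + 2 - 1 = m + 1 from rfl, show m + 1 - 1 = m from rfl, pow_succ, mul_comm]
  · simp only [gmCoef, if_neg h]
    rw [show m + 2 - 1 - k = (m + 1 - 1 - k) + 1 from by omega, pow_succ]
    ring

/-- weight of a snoc-extended path -/
lemma gmWeight_snoc (hp : 0 < p) (h0 : 0 ≤ lam) (h1 : lam ≤ 1) (hB : ∀ i j, 0 ≤ B i j)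
    (Q : Fin (m + 2) → Fin n) (j : Fin n) :
    gmWeight n (m + 2) lam p B (Fin.snoc Q j)
      = (lam * gmWeight n (m + 1) lam p B Q ^ p
          + (1 - lam) * B (Q (Fin.last (m + 1))) j ^ p) ^ (1 / p) := by
  rw [gmWeight_pow hp h0 h1 hB, gmWeight, Fin.sum_univ_castSucc, Finset.mul_sum]
  congr 1
  congr 1
  · refine Finset.sum_congr rfl fun k _ => ?_
    have e1 : (Fin.snoc Q j : Fin (m+3) → Fin n) k.castSucc.castSucc = Q k.castSucc := by
      simp [Fin.snoc_castSucc]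
    have e2 : (Fin.snoc Q j : Fin (m+3) → Fin n) k.castSucc.succ = Q k.succ := by
      rw [Fin.succ_castSucc, Fin.snoc_castSucc]
    rw [e1, e2, Fin.coe_castSucc, gmCoef_succ (k : ℕ) (Nat.lt_succ_iff.mp k.isLt)]
    ring
  · have e1 : (Fin.snoc Q j : Fin (m+3) → Fin n) (Fin.last (m+1)).castSucc
        = Q (Fin.last (m + 1)) := by simp [Fin.snoc_castSucc]
    have e2 : (Fin.snoc Q j : Fin (m+3) → Fin n) (Fin.last (m+1)).succ = j := by
      rw [Fin.succ_last]; simp [Fin.snoc_last]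
    rw [e1, e2]
    have : gmCoef lam (m + 2) ((Fin.last (m+1) : Fin (m+2)) : ℕ) = 1 - lam := by
      simp [gmCoef, Fin.val_last]
    rw [this]

end aux

lemma gmPath_nonempty {n m : ℕ} (hn : 1 ≤ n) (hm : 1 ≤ m) (i j : Fin n) :
    Nonempty {P : Fin (m + 1) → Fin n // P 0 = i ∧ P (Fin.last m) = j} := by
  have h0 : (0 : Fin (m + 1)) ≠ Fin.last m := by
    intro h
    have := congrArg Fin.val h
    simp [Fin.val_last] at this
    omega
  exact ⟨⟨fun l => if l = Fin.last m then j else i, by simp [h0], by simp⟩⟩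

/-- Theorem 3.1 (non-membership part): the `(i,j)` entry of the `m`-th
maxgeneralized mean–mingeneralized mean power of `A` is the minimum of the
non-membership weights of all `m`-paths from `i` to `j`. -/
theorem gmPow_nu_eq_inf_weight (n : ℕ) (hn : 1 ≤ n) (Amu Anu : Fin n → Fin n → ℝ)
    (hA : IsIFM n Amu Anu) (lam p : ℝ) (hlam : lam ∈ Set.Icc (0 : ℝ) 1) (hp : 0 < p)
    (m : ℕ) (hm : 1 ≤ m) (i j : Fin n) :
    (gmPow n lam p Amu Anu m).2 i j =
      ⨅ P : {P : Fin (m + 1) → Fin n // P 0 = i ∧ P (Fin.last m) = j},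
        gmWeight n m lam p Anu P.1 := by
  obtain ⟨h0, h1⟩ := hlam
  have hB : ∀ a b, 0 ≤ Anu a b := fun a b => (hA a b).2.1
  obtain ⟨k, rfl⟩ : ∃ k, m = k + 1 := ⟨m - 1, by omega⟩
  clear hm
  induction k generalizing i j with
  | zero =>
    haveI := gmPath_nonempty hn (le_refl 1) i j
    have hconst : ∀ P : {P : Fin 2 → Fin n // P 0 = i ∧ P (Fin.last 1) = j},
        gmWeight n 1 lam p Anu P.1 = Anu i j := by
      rintro ⟨P, hP0, hPl⟩
      show gmWeight n 1 lam p Anu P = Anu i j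
      have e0 : P (0 : Fin 1).castSucc = i := by simpa using hP0
      have e1 : P (0 : Fin 1).succ = j := by simpa using hPl
      rw [gmWeight, Fin.sum_univ_one, e0, e1]
      norm_num [gmCoef]
      rw [← Real.rpow_mul (hB i j), mul_inv_cancel₀ hp.ne', Real.rpow_one]
    calc (gmPow n lam p Amu Anu 1).2 i j = Anu i j := rfl
      _ = _ := by rw [iInf_congr hconst, ciInf_const]
  | succ k ih =>
    haveI : ∀ a b : Fin n,
        Nonempty {P : Fin (k + 1 + 1) → Fin n // P 0 = a ∧ P (Fin.last (k + 1)) = b} :=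
      fun a b => gmPath_nonempty hn (by omega) a b
    haveI := gmPath_nonempty hn (by omega : 1 ≤ k + 2) i j
    have hWnn : ∀ t, 0 ≤ (gmPow n lam p Amu Anu (k + 1)).2 i t := by
      intro t
      rw [ih i t]
      exact le_ciInf fun Q => gmWeight_nonneg h0 h1 hB Q.1
    have hLHS : (gmPow n lam p Amu Anu (k + 2)).2 i j
        = ⨅ t : Fin n, (lam * (gmPow n lam p Amu Anu (k + 1)).2 i t ^ p
            + (1 - lam) * Anu t j ^ p) ^ (1 / p) := rfl
    rw [hLHS]
    apply le_antisymm
    · apply le_ciInf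
      rintro ⟨P, hP0, hPl⟩
      set Q : Fin (k + 2) → Fin n := Fin.init P with hQ
      set t : Fin n := Q (Fin.last (k + 1)) with ht
      have hQ0 : Q 0 = i := by
        show P (Fin.castSucc 0) = i
        rwa [Fin.castSucc_zero]
      have hbdd : BddBelow (Set.range fun t : Fin n =>
          (lam * (gmPow n lam p Amu Anu (k + 1)).2 i t ^ p
            + (1 - lam) * Anu t j ^ p) ^ (1 / p)) := Finite.bddBelow_range _
      refine le_trans (ciInf_le hbdd t) ?_
      have hWle : (gmPow n lam p Amu Anu (k + 1)).2 i t
          ≤ gmWeight n (k + 1) lam p Anu Q := by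
        rw [ih i t]
        exact ciInf_le
          (f := fun P : {P : Fin (k + 1 + 1) → Fin n // P 0 = i ∧ P (Fin.last (k + 1)) = t} =>
            gmWeight n (k + 1) lam p Anu P.1)
          (Finite.bddBelow_range _) ⟨Q, hQ0, rfl⟩
      have hmono : (lam * (gmPow n lam p Amu Anu (k + 1)).2 i t ^ p
            + (1 - lam) * Anu t j ^ p) ^ (1 / p)
          ≤ (lam * gmWeight n (k + 1) lam p Anu Q ^ p
            + (1 - lam) * Anu t j ^ p) ^ (1 / p) := by
        apply Real.rpow_le_rpow
        · have h2 : 0 ≤ (gmPow n lam p Amu Anu (k + 1)).2 i t ^ p :=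
            Real.rpow_nonneg (hWnn t) _
          have h3 : 0 ≤ Anu t j ^ p := Real.rpow_nonneg (hB t j) _
          have h4 : (0:ℝ) ≤ 1 - lam := by linarith
          exact add_nonneg (mul_nonneg h0 h2) (mul_nonneg h4 h3)
        · have : (gmPow n lam p Amu Anu (k + 1)).2 i t ^ p
              ≤ gmWeight n (k + 1) lam p Anu Q ^ p :=
            Real.rpow_le_rpow (hWnn t) hWle hp.le
          nlinarith
        · positivity
      refine hmono.trans_eq ?_
      rw [ht, ← gmWeight_snoc hp h0 h1 hB Q j]
      have hQP : Fin.snoc Q j = P := by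
        rw [hQ, ← hPl]
        exact Fin.snoc_init_self P
      exact congrArg (gmWeight n (k + 2) lam p Anu) hQP
    · haveI : Nonempty (Fin n) := ⟨⟨0, by omega⟩⟩
      apply le_ciInf
      intro t
      obtain ⟨Q0, hQ0min⟩ := Finite.exists_min
        (fun Q : {P : Fin (k + 1 + 1) → Fin n // P 0 = i ∧ P (Fin.last (k + 1)) = t} =>
          gmWeight n (k + 1) lam p Anu Q.1)
      have hWt : (gmPow n lam p Amu Anu (k + 1)).2 i t = gmWeight n (k + 1) lam p Anu Q0.1 := by
        rw [ih i t]
        exact le_antisymm (ciInf_le (Finite.bddBelow_range _) Q0) (le_ciInf hQ0min)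
      have hsnoc := gmWeight_snoc hp h0 h1 hB Q0.1 j
      rw [Q0.2.2] at hsnoc
      have hs0 : (Fin.snoc Q0.1 j : Fin (k + 3) → Fin n) 0 = i := by
        show (Fin.snoc Q0.1 j : Fin (k + 3) → Fin n) (Fin.castSucc 0) = i
        rw [Fin.snoc_castSucc, Q0.2.1]
      have hsl : (Fin.snoc Q0.1 j : Fin (k + 3) → Fin n) (Fin.last (k + 2)) = j := by simp
      have hmem := ciInf_le
        (f := fun P : {P : Fin (k + 2 + 1) → Fin n //
            P 0 = i ∧ P (Fin.last (k + 2)) = j} =>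
          gmWeight n (k + 2) lam p Anu P.1)
        (Finite.bddBelow_range _) ⟨Fin.snoc Q0.1 j, hs0, hsl⟩
      rw [hWt]
      exact hmem.trans_eq hsnoc
end

section
/- Let n ≥ 1, let A be an IFM of order n, let λ ∈ [0,1] and let p ≥ 1 be a real number. Then for every m ≥ 1 and all r, s, j, the entries in column j of the m-th maxgeneralized mean–mingeneralized mean power of A satisfy |(A^m)μ r j − (A^m)μ s j| ≤ λ^((m−1)/p) and |(A^m)ν r j − (A^m)ν s j| ≤ λ^((m−1)/p). -/
open Filter Topology

/-- Key Lipschitz estimate, via Minkowski's inequality. -/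
lemma key_lip {lam p c x y : ℝ} (hlam : 0 ≤ lam) (hp : 1 ≤ p) (hc : 0 ≤ c)
    (hy : 0 ≤ y) (hxy : y ≤ x) :
    (lam * x ^ p + c) ^ (1 / p) ≤ (lam * y ^ p + c) ^ (1 / p) + lam ^ (1 / p) * (x - y) := by
  have hp0 : (0:ℝ) < p := lt_of_lt_of_le one_pos hp
  have hpne : p ≠ 0 := hp0.ne'
  have hl : (0:ℝ) ≤ lam ^ (1/p) := Real.rpow_nonneg hlam _
  have hlp : (lam ^ (1/p)) ^ p = lam := by
    rw [← Real.rpow_mul hlam, one_div_mul_cancel hpne, Real.rpow_one]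
  have hcp : (c ^ (1/p)) ^ p = c := by
    rw [← Real.rpow_mul hc, one_div_mul_cancel hpne, Real.rpow_one]
  have hxy0 : 0 ≤ x - y := sub_nonneg.2 hxy
  set f : Fin 2 → ℝ := ![lam ^ (1/p) * y, c ^ (1/p)] with hf
  set g : Fin 2 → ℝ := ![lam ^ (1/p) * (x - y), 0] with hg
  have hfn : ∀ i ∈ Finset.univ, 0 ≤ f i := by
    intro i _; fin_cases i
    · exact mul_nonneg hl hy
    · exact Real.rpow_nonneg hc _
  have hgn : ∀ i ∈ Finset.univ, 0 ≤ g i := by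
    intro i _; fin_cases i
    · exact mul_nonneg hl hxy0
    · exact le_refl 0
  have H := Real.Lp_add_le_of_nonneg (f := f) (g := g) (s := Finset.univ) hp hfn hgn
  have e1 : ∑ i, (f i + g i) ^ p = lam * x ^ p + c := by
    simp only [hf, hg, Fin.sum_univ_two, Matrix.cons_val_zero, Matrix.cons_val_one,
      Matrix.head_cons, add_zero]
    rw [show lam ^ (1/p) * y + lam ^ (1/p) * (x - y) = lam ^ (1/p) * x by ring,
      Real.mul_rpow hl (hy.trans hxy), hlp, hcp]
  have e2 : ∑ i, f i ^ p = lam * y ^ p + c := by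
    simp only [hf, Fin.sum_univ_two, Matrix.cons_val_zero, Matrix.cons_val_one, Matrix.head_cons]
    rw [Real.mul_rpow hl hy, hlp, hcp]
  have e3 : ∑ i, g i ^ p = (lam ^ (1/p) * (x - y)) ^ p := by
    simp only [hg, Fin.sum_univ_two, Matrix.cons_val_zero, Matrix.cons_val_one, Matrix.head_cons,
      Real.zero_rpow hpne, add_zero]
  rw [e1, e2, e3] at H
  refine H.trans ?_
  gcongr
  rw [← Real.rpow_mul (mul_nonneg hl hxy0), mul_one_div_cancel hpne, Real.rpow_one]

lemma key_abs {lam p c x y : ℝ} (hlam : 0 ≤ lam) (hp : 1 ≤ p) (hc : 0 ≤ c)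
    (hx : 0 ≤ x) (hy : 0 ≤ y) :
    |(lam * x ^ p + c) ^ (1/p) - (lam * y ^ p + c) ^ (1/p)| ≤ lam ^ (1/p) * |x - y| := by
  have hp0 : (0:ℝ) < p := lt_of_lt_of_le one_pos hp
  have mono : ∀ u v : ℝ, 0 ≤ u → u ≤ v →
      (lam * u ^ p + c) ^ (1/p) ≤ (lam * v ^ p + c) ^ (1/p) := by
    intro u v hu huv
    apply Real.rpow_le_rpow
    · have : (0:ℝ) ≤ u ^ p := Real.rpow_nonneg hu _
      nlinarith
    · have : u ^ p ≤ v ^ p := Real.rpow_le_rpow hu huv hp0.le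
      nlinarith
    · positivity
  rcases le_total y x with h | h
  · rw [abs_of_nonneg (sub_nonneg.2 (mono y x hy h)), abs_of_nonneg (sub_nonneg.2 h)]
    linarith [key_lip hlam hp hc hy h]
  · rw [abs_of_nonpos (sub_nonpos.2 (mono x y hx h)), abs_of_nonpos (sub_nonpos.2 h)]
    linarith [key_lip hlam hp hc hx h]

lemma gmPow_mem (n : ℕ) (Amu Anu : Fin n → Fin n → ℝ) (hA : IsIFM n Amu Anu)
    {lam p : ℝ} (hlam : lam ∈ Set.Icc (0:ℝ) 1) (hp : 1 ≤ p) (k : ℕ) :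
    ∀ i j, (gmPow n lam p Amu Anu k).1 i j ∈ Set.Icc (0:ℝ) 1 ∧
      (gmPow n lam p Amu Anu k).2 i j ∈ Set.Icc (0:ℝ) 1 := by
  obtain ⟨hl0, hl1⟩ := hlam
  have hp0 : (0:ℝ) < p := lt_of_lt_of_le one_pos hp
  have base : ∀ i j, Amu i j ∈ Set.Icc (0:ℝ) 1 ∧ Anu i j ∈ Set.Icc (0:ℝ) 1 := by
    intro i j
    obtain ⟨h1, h2, h3⟩ := hA i j
    exact ⟨⟨h1, by linarith⟩, ⟨h2, by linarith⟩⟩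
  induction k with
  | zero => exact base
  | succ k ih =>
    match k, ih with
    | 0, _ => exact base
    | k + 1, ih =>
      intro i j
      have hne : Nonempty (Fin n) := ⟨i⟩
      have hterm : ∀ (u v : ℝ), u ∈ Set.Icc (0:ℝ) 1 → v ∈ Set.Icc (0:ℝ) 1 →
          (lam * u ^ p + (1 - lam) * v ^ p) ^ (1/p) ∈ Set.Icc (0:ℝ) 1 := by
        rintro u v ⟨hu0, hu1⟩ ⟨hv0, hv1⟩
        have hu' : (0:ℝ) ≤ u ^ p := Real.rpow_nonneg hu0 _
        have hv' : (0:ℝ) ≤ v ^ p := Real.rpow_nonneg hv0 _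
        have hnn : (0:ℝ) ≤ lam * u ^ p + (1 - lam) * v ^ p := by nlinarith
        constructor
        · exact Real.rpow_nonneg hnn _
        · have h1 : u ^ p ≤ 1 := Real.rpow_le_one hu0 hu1 hp0.le
          have h2 : v ^ p ≤ 1 := Real.rpow_le_one hv0 hv1 hp0.le
          have : lam * u ^ p + (1 - lam) * v ^ p ≤ 1 := by nlinarith
          exact Real.rpow_le_one hnn this (le_of_lt (one_div_pos.2 hp0))
      constructor
      · show (⨆ t : Fin n, (lam * (gmPow n lam p Amu Anu (k+1)).1 i t ^ p
            + (1 - lam) * Amu t j ^ p) ^ (1/p)) ∈ Set.Icc (0:ℝ) 1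
        constructor
        · obtain ⟨t⟩ := hne
          exact le_trans (hterm _ _ (ih i t).1 (base t j).1).1
            (le_ciSup (f := fun t => (lam * (gmPow n lam p Amu Anu (k+1)).1 i t ^ p
              + (1 - lam) * Amu t j ^ p) ^ (1/p))
              (Set.Finite.bddAbove (Set.finite_range _)) t)
        · exact ciSup_le fun t => (hterm _ _ (ih i t).1 (base t j).1).2
      · show (⨅ t : Fin n, (lam * (gmPow n lam p Amu Anu (k+1)).2 i t ^ p
            + (1 - lam) * Anu t j ^ p) ^ (1/p)) ∈ Set.Icc (0:ℝ) 1
        constructor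
        · exact le_ciInf fun t => (hterm _ _ (ih i t).2 (base t j).2).1
        · obtain ⟨t⟩ := hne
          exact le_trans
            (ciInf_le (f := fun t => (lam * (gmPow n lam p Amu Anu (k+1)).2 i t ^ p
              + (1 - lam) * Anu t j ^ p) ^ (1/p))
              (Set.Finite.bddBelow (Set.finite_range _)) t)
            (hterm _ _ (ih i t).2 (base t j).2).2

lemma sup_abs_le {n : ℕ} [Nonempty (Fin n)] {F G : Fin n → ℝ} {d : ℝ}
    (h : ∀ t, |F t - G t| ≤ d) : |(⨆ t, F t) - ⨆ t, G t| ≤ d := by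
  rw [abs_sub_le_iff]
  constructor
  · rw [sub_le_iff_le_add]
    refine ciSup_le fun t => ?_
    have h1 := (abs_sub_le_iff.1 (h t)).1
    have h2 : G t ≤ ⨆ u, G u := le_ciSup (Set.Finite.bddAbove (Set.finite_range G)) t
    linarith
  · rw [sub_le_iff_le_add]
    refine ciSup_le fun t => ?_
    have h1 := (abs_sub_le_iff.1 (h t)).2
    have h2 : F t ≤ ⨆ u, F u := le_ciSup (Set.Finite.bddAbove (Set.finite_range F)) t
    linarith

lemma inf_abs_le {n : ℕ} [Nonempty (Fin n)] {F G : Fin n → ℝ} {d : ℝ}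
    (h : ∀ t, |F t - G t| ≤ d) : |(⨅ t, F t) - ⨅ t, G t| ≤ d := by
  rw [abs_sub_le_iff]
  constructor
  · have h2 : (⨅ u, F u) - d ≤ ⨅ t, G t := le_ciInf fun t => by
      have h1 := (abs_sub_le_iff.1 (h t)).1
      have h3 : (⨅ u, F u) ≤ F t := ciInf_le (Set.Finite.bddBelow (Set.finite_range F)) t
      linarith
    linarith
  · have h2 : (⨅ u, G u) - d ≤ ⨅ t, F t := le_ciInf fun t => by
      have h1 := (abs_sub_le_iff.1 (h t)).2
      have h3 : (⨅ u, G u) ≤ G t := ciInf_le (Set.Finite.bddBelow (Set.finite_range G)) t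
      linarith
    linarith

/-- Entries in a fixed column of the `m`-th maxgeneralized mean–mingeneralized
mean power differ by at most `lam^((m-1)/p)`. -/
theorem gmPow_column_close (n : ℕ) (hn : 1 ≤ n) (Amu Anu : Fin n → Fin n → ℝ)
    (hA : IsIFM n Amu Anu) (lam p : ℝ) (hlam : lam ∈ Set.Icc (0 : ℝ) 1) (hp : 1 ≤ p)
    (m : ℕ) (hm : 1 ≤ m) (r s j : Fin n) :
    |(gmPow n lam p Amu Anu m).1 r j - (gmPow n lam p Amu Anu m).1 s j| ≤
        lam ^ (((m : ℝ) - 1) / p) ∧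
      |(gmPow n lam p Amu Anu m).2 r j - (gmPow n lam p Amu Anu m).2 s j| ≤
        lam ^ (((m : ℝ) - 1) / p) := by
  obtain ⟨hl0, hl1⟩ := hlam
  have hp0 : (0:ℝ) < p := lt_of_lt_of_le one_pos hp
  have hne : Nonempty (Fin n) := ⟨r⟩
  have mem := gmPow_mem n Amu Anu hA ⟨hl0, hl1⟩ hp
  induction m generalizing j with
  | zero => omega
  | succ m ih =>
    match m, ih with
    | 0, _ =>
      show |Amu r j - Amu s j| ≤ _ ∧ |Anu r j - Anu s j| ≤ _
      rw [Nat.cast_one, sub_self, zero_div, Real.rpow_zero]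
      obtain ⟨⟨hr1, hr2⟩, ⟨hr3, hr4⟩⟩ := mem 1 r j
      obtain ⟨⟨hs1, hs2⟩, ⟨hs3, hs4⟩⟩ := mem 1 s j
      constructor <;> rw [abs_sub_le_iff] <;> constructor <;> simp [gmPow] at * <;> linarith
    | m + 1, ih =>
      have IH := ih
      set k := m + 1 with hk
      have hexp : lam ^ (((k:ℝ) + 1 - 1) / p) = lam ^ (1/p) * lam ^ (((k:ℝ) - 1) / p) := by
        rw [← Real.rpow_add' hl0]
        · congr 1; field_simp; ring
        · have : 1/p + ((k:ℝ) - 1)/p = (k:ℝ)/p := by field_simp; ring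
          rw [this]
          have hk1 : (1:ℝ) ≤ (k:ℝ) := by exact_mod_cast Nat.one_le_iff_ne_zero.2 (by omega)
          positivity
      have hlp : (0:ℝ) ≤ lam ^ (1/p) := Real.rpow_nonneg hl0 _
      have push : ((k + 1 : ℕ) : ℝ) - 1 = (k:ℝ) + 1 - 1 := by push_cast; ring
      rw [push, hexp]
      constructor
      · show |(⨆ t : Fin n, (lam * (gmPow n lam p Amu Anu k).1 r t ^ p
            + (1 - lam) * Amu t j ^ p) ^ (1/p)) -
          ⨆ t : Fin n, (lam * (gmPow n lam p Amu Anu k).1 s t ^ p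
            + (1 - lam) * Amu t j ^ p) ^ (1/p)| ≤ _
        refine sup_abs_le fun t => ?_
        have hc : (0:ℝ) ≤ (1 - lam) * Amu t j ^ p := by
          have := Real.rpow_nonneg (hA t j).1 p
          nlinarith
        refine (key_abs hl0 hp hc (mem k r t).1.1 (mem k s t).1.1).trans ?_
        exact mul_le_mul_of_nonneg_left (IH (by omega) t).1 hlp
      · show |(⨅ t : Fin n, (lam * (gmPow n lam p Amu Anu k).2 r t ^ p
            + (1 - lam) * Anu t j ^ p) ^ (1/p)) -
          ⨅ t : Fin n, (lam * (gmPow n lam p Amu Anu k).2 s t ^ p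
            + (1 - lam) * Anu t j ^ p) ^ (1/p)| ≤ _
        refine inf_abs_le fun t => ?_
        have hc : (0:ℝ) ≤ (1 - lam) * Anu t j ^ p := by
          have := Real.rpow_nonneg (hA t j).2.1 p
          nlinarith
        refine (key_abs hl0 hp hc (mem k r t).2.1 (mem k s t).2.1).trans ?_
        exact mul_le_mul_of_nonneg_left (IH (by omega) t).2 hlp
end
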